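/- arXiv:2503.22418 — 2 statements merged into one kernel-verified Lean document; each statement's English description precedes it below -/
import Mathlib

section
/- Let C and F be finite sets with |C| ≥ 2, let p be a probability mass function on C × F, fix f ∈ F, and let ĉ be a maximizer of c ↦ p(c, f). Define δ = p(ĉ, f) − max_{c ∈ C \ {ĉ}} p(c, f) and ε_glob = δ/(1 + δ). Then for every ε ∈ [0,1]: ĉ is the unique maximizer of c ↦ p'(c, f) for all p' in the ε-contamination M_{p,ε} if and only if ε < ε_glob. In particular, ε_glob is the smallest ε ∈ [0,1] for which the prediction ĉ fails to be robust w.r.t. M_{p,ε}. -/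
/-- A probability mass function on a finite set: nonnegative and sums to one. -/
def IsPMF {X : Type*} [Fintype X] (p : X → ℝ) : Prop :=
  (∀ x, 0 ≤ p x) ∧ ∑ x, p x = 1

/-- The ε-contamination of a mass function `p`. -/
def contam {X : Type*} [Fintype X] (p : X → ℝ) (ε : ℝ) : Set (X → ℝ) :=
  {q | ∃ p' : X → ℝ, IsPMF p' ∧ q = fun x => (1 - ε) * p x + ε * p' x}

theorem stmt4 {C F : Type*} [Fintype C] [Fintype F] (hC : 2 ≤ Fintype.card C)
    (p : C × F → ℝ) (hp : IsPMF p) (f : F) (c₀ : C)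
    (hmax : ∀ c : C, p (c, f) ≤ p (c₀, f)) :
    let δ : ℝ := p (c₀, f) - sSup {y : ℝ | ∃ c : C, c ≠ c₀ ∧ y = p (c, f)}
    (∀ ε ∈ Set.Icc (0 : ℝ) 1,
        ((∀ q ∈ contam p ε, ∀ c : C, c ≠ c₀ → q (c, f) < q (c₀, f)) ↔ ε < δ / (1 + δ))) ∧
      IsLeast {ε : ℝ | ε ∈ Set.Icc (0 : ℝ) 1 ∧
          ¬ (∀ q ∈ contam p ε, ∀ c : C, c ≠ c₀ → q (c, f) < q (c₀, f))}
        (δ / (1 + δ)) := by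
  classical
  obtain ⟨hp0, hp1⟩ := hp
  intro δ
  set S : Set ℝ := {y : ℝ | ∃ c : C, c ≠ c₀ ∧ y = p (c, f)} with hSdef
  obtain ⟨c₁, hc₁⟩ := Fintype.exists_ne_of_one_lt_card (by omega) c₀
  have hSne : S.Nonempty := ⟨p (c₁, f), c₁, hc₁, rfl⟩
  have hSfin : S.Finite := by
    have hsub : S ⊆ (fun c => p (c, f)) '' Set.univ := by
      rintro y ⟨c, hc, rfl⟩; exact ⟨c, trivial, rfl⟩
    exact (Set.finite_univ.image _).subset hsub
  have hbdd : BddAbove S := hSfin.bddAbove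
  obtain ⟨cs, hcs, hcsval⟩ : ∃ c : C, c ≠ c₀ ∧ sSup S = p (c, f) :=
    hSne.csSup_mem hSfin
  have hsle : ∀ c : C, c ≠ c₀ → p (c, f) ≤ sSup S := fun c hc =>
    le_csSup hbdd ⟨c, hc, rfl⟩
  have hδdef : δ = p (c₀, f) - sSup S := rfl
  have hδ0 : 0 ≤ δ := by
    have := hmax cs; rw [hδdef, hcsval]; linarith
  have h1δ : (0:ℝ) < 1 + δ := by linarith
  -- any pmf is pointwise ≤ 1
  have hle1 : ∀ p' : C × F → ℝ, IsPMF p' → ∀ x, p' x ≤ 1 := by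
    rintro p' ⟨h0, h1⟩ x
    calc p' x ≤ ∑ y, p' y := Finset.single_le_sum (fun i _ => h0 i) (Finset.mem_univ x)
    _ = 1 := h1
  -- point mass at (cs, f)
  set pm : C × F → ℝ := fun x => if x = (cs, f) then 1 else 0 with hpm
  have hpmPMF : IsPMF pm := by
    constructor
    · intro x; simp only [hpm]; split <;> norm_num
    · simp [hpm]
  have hpm_cs : pm (cs, f) = 1 := by simp [hpm]
  have hpm_c0 : pm (c₀, f) = 0 := by
    simp only [hpm, if_neg (by simp [hcs.symm] : ((c₀ : C), f) ≠ (cs, f))]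
  -- main iff
  have key : ∀ ε ∈ Set.Icc (0 : ℝ) 1,
      ((∀ q ∈ contam p ε, ∀ c : C, c ≠ c₀ → q (c, f) < q (c₀, f)) ↔ ε < δ / (1 + δ)) := by
    rintro ε ⟨hε0, hε1⟩
    rw [lt_div_iff₀ h1δ]
    constructor
    · intro hrob
      have hq : (fun x => (1 - ε) * p x + ε * pm x) ∈ contam p ε := ⟨pm, hpmPMF, rfl⟩
      have := hrob _ hq cs hcs
      simp only [hpm_cs, hpm_c0] at this
      have hs := hcsval
      nlinarith [this, hs, hmax cs]
    · intro hεlt q hq c hc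
      obtain ⟨p', hp', rfl⟩ := hq
      have h1 : p (c, f) ≤ sSup S := hsle c hc
      have h2 : p' (c, f) ≤ 1 := hle1 p' hp' (c, f)
      have h3 : 0 ≤ p' (c₀, f) := hp'.1 (c₀, f)
      have h4 : sSup S = p (cs, f) := hcsval
      have h5 : p (cs, f) ≤ p (c₀, f) := hmax cs
      simp only
      nlinarith
  refine ⟨key, ?_, ?_⟩
  · have hmem : δ / (1 + δ) ∈ Set.Icc (0:ℝ) 1 := by
      constructor
      · positivity
      · rw [div_le_one h1δ]; linarith
    refine ⟨hmem, ?_⟩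
    intro hrob
    exact absurd ((key _ hmem).mp hrob) (lt_irrefl _)
  · rintro ε ⟨hε, hnrob⟩
    by_contra h
    push_neg at h
    exact hnrob ((key ε hε).mpr h)
end

section
/- Let p be a probability mass function on a finite set C × F with |C| ≥ 2, f ∈ F, ĉ the unique maximizer of c ↦ p(c, f), and let ε_glob = δ/(1+δ) with δ = p(ĉ, f) − max_{c ≠ ĉ} p(c, f) > 0. Then for every q in the ε-contamination M_{p,ε} with ε < ε_glob, and for every c ≠ ĉ, we have q(c, f) < q(ĉ, f). -/
theorem stmt17 {C F : Type*} [Fintype C] [Fintype F] (hC : 2 ≤ Fintype.card C)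
    (p : C × F → ℝ) (hp : IsPMF p) (f : F) (c₀ : C)
    (hmax : ∀ c : C, c ≠ c₀ → p (c, f) < p (c₀, f)) :
    let δ : ℝ := p (c₀, f) - sSup {y : ℝ | ∃ c : C, c ≠ c₀ ∧ y = p (c, f)}
    0 < δ →
      ∀ ε : ℝ, 0 ≤ ε → ε < δ / (1 + δ) →
        ∀ q ∈ contam p ε, ∀ c : C, c ≠ c₀ → q (c, f) < q (c₀, f) := by
  intro δ hδ ε hε0 hεlt q hq c hc
  obtain ⟨p', hp', rfl⟩ := hq
  set S : Set ℝ := {y : ℝ | ∃ c : C, c ≠ c₀ ∧ y = p (c, f)} with hS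
  set M : ℝ := sSup S with hM
  have hSfin : S.Finite := by
    have : S ⊆ (fun c : C => p (c, f)) '' Set.univ := by
      rintro y ⟨c, hc, rfl⟩; exact ⟨c, trivial, rfl⟩
    exact (Set.Finite.image _ Set.finite_univ).subset this
  have hbdd : BddAbove S := hSfin.bddAbove
  have hpcM : p (c, f) ≤ M := le_csSup hbdd ⟨c, hc, rfl⟩
  have hM0 : 0 ≤ M := le_trans (hp.1 (c, f)) hpcM
  have hδpos : 0 < δ := hδ
  have h1δ : 0 < 1 + δ := by linarith
  have hε1 : ε < 1 := by
    have : δ / (1 + δ) < 1 := by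
      rw [div_lt_one h1δ]; linarith
    linarith
  have hkey : ε < (1 - ε) * δ := by
    rw [lt_div_iff₀ h1δ] at hεlt
    nlinarith
  -- p' c f ≤ 1
  have hp'le : p' (c, f) ≤ 1 := by
    have := Finset.single_le_sum (f := p') (fun x _ => hp'.1 x) (Finset.mem_univ (c, f))
    rw [hp'.2] at this; exact this
  have hp'0 : 0 ≤ p' (c₀, f) := hp'.1 _
  have hδdef : δ = p (c₀, f) - M := rfl
  have h1ε : 0 ≤ 1 - ε := by linarith
  calc (1 - ε) * p (c, f) + ε * p' (c, f)
      ≤ (1 - ε) * M + ε * 1 := by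
        gcongr
    _ < (1 - ε) * p (c₀, f) := by nlinarith
    _ ≤ (1 - ε) * p (c₀, f) + ε * p' (c₀, f) := by nlinarith
end
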